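/- Fix ρ ∈ (0,1), ι ∈ (0,1/2), λ₁ > 0, β ∈ (0,1), b > 0, and let V(Λ) = exp(λ₁‖Λ‖). Let Γ be a Borel probability measure on ℝ^d, let S be a set of parameters, and let (g_θ)_{θ∈S} be a family of measurable allocation functions with values in [ι, 1−ι] such that: (i) |g_θ(Λ,X) − g_{θ'}(Λ,X)| ≤ L_g·‖θ − θ'‖ for all θ, θ' ∈ S and all Λ, X ∈ ℝ^d; and (ii) (P_{g_θ} V)(Λ) ≤ β·V(Λ) + b for every θ ∈ S and Λ ∈ ℝ^d. Then, setting L_P := L_g·(β + b)/ι, for all θ, θ' ∈ S, every Λ ∈ ℝ^d, and every measurable h: ℝ^d → ℝ with |h(x)| ≤ V(x) for all x, one has |(P_{g_θ} h)(Λ) − (P_{g_{θ'}} h)(Λ)| ≤ L_P·‖θ − θ'‖·V(Λ); in particular the V-norm distance ‖P_{g_θ}(Λ,·) − P_{g_{θ'}}(Λ,·)‖_V ≤ L_P·‖θ − θ'‖·V(Λ). -/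

import Mathlib

open MeasureTheory ProbabilityTheory Filter Set
open scoped ENNReal RealInnerProductSpace

noncomputable section

/-- `ℝ^d` with the Euclidean norm. -/
abbrev Ed (d : ℕ) : Type := EuclideanSpace ℝ (Fin d)

/-- Action of the CAR transition kernel `P_g` on a function `h`:
`(P_g h)(Λ) = ∫ [ g(Λ,X)·h(Λ + (1−ρ)X) + (1−g(Λ,X))·h(Λ − ρX) ] dΓ(X)`. -/
def kernelOp (d : ℕ) (ρ : ℝ) (Γ : Measure (Ed d)) (g : Ed d → Ed d → ℝ)
    (h : Ed d → ℝ) (Λ : Ed d) : ℝ :=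
  ∫ X, g Λ X * h (Λ + (1 - ρ) • X) + (1 - g Λ X) * h (Λ - ρ • X) ∂Γ

/-- `W_Γ`: the linear span of the topological support of `Γ` (the set of points all of
whose open neighbourhoods have positive measure). -/
def suppSpan (d : ℕ) (Γ : Measure (Ed d)) : Submodule ℝ (Ed d) :=
  Submodule.span ℝ {x : Ed d | ∀ U : Set (Ed d), IsOpen U → x ∈ U → 0 < Γ U}

/-- The `(M,Δ)`-negative feedback condition for an allocation function `g`. -/
def NegFeedback (d : ℕ) (ρ M Δ : ℝ) (Γ : Measure (Ed d)) (g : Ed d → Ed d → ℝ) : Prop :=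
  ∀ Λ : Ed d, Λ ∈ suppSpan d Γ → M ≤ ‖Λ‖ →
    (∫ X, (g Λ X - ρ) * (⟪X, Λ⟫ / ‖Λ‖) ∂Γ) ≤ -Δ

/-- `Γ` is sub-exponential: `∫ exp(λ‖X‖) dΓ(X) < ∞` for some `λ > 0`. -/
def SubExp (d : ℕ) (Γ : Measure (Ed d)) : Prop :=
  ∃ l : ℝ, 0 < l ∧ Integrable (fun x => Real.exp (l * ‖x‖)) Γ

/-- Lipschitz continuity of the CAR kernel in the parameter: if the allocation family is
Lipschitz in `θ` and satisfies the drift inequality `P_{g_θ} V ≤ βV + b` with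
`V = exp(λ₁‖·‖)`, then `‖P_{g_θ}(Λ,·) − P_{g_{θ'}}(Λ,·)‖_V ≤ L_P·‖θ−θ'‖·V(Λ)` with
`L_P = L_g·(β+b)/ι`. -/
theorem stmt19
    (d : ℕ) (ρ ι lam₁ β b Lg : ℝ)
    (hρ : ρ ∈ Set.Ioo (0 : ℝ) 1) (hι : ι ∈ Set.Ioo (0 : ℝ) (1 / 2))
    (hlam₁ : 0 < lam₁) (hβ : β ∈ Set.Ioo (0 : ℝ) 1) (hb : 0 < b) (hLg : 0 < Lg)
    (Γ : Measure (Ed d)) [IsProbabilityMeasure Γ]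
    {Θ : Type} [NormedAddCommGroup Θ] (S : Set Θ)
    (g : Θ → Ed d → Ed d → ℝ)
    (hg_meas : ∀ t, Measurable (Function.uncurry (g t)))
    (hg_range : ∀ t ∈ S, ∀ Λ X, g t Λ X ∈ Set.Icc ι (1 - ι))
    (hLip : ∀ t ∈ S, ∀ t' ∈ S, ∀ (Λ X : Ed d),
      |g t Λ X - g t' Λ X| ≤ Lg * ‖t - t'‖)
    (hdrift : ∀ t ∈ S, ∀ Λ : Ed d,
      (∫⁻ X, ENNReal.ofReal
          (g t Λ X * Real.exp (lam₁ * ‖Λ + (1 - ρ) • X‖) +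
            (1 - g t Λ X) * Real.exp (lam₁ * ‖Λ - ρ • X‖)) ∂Γ)
        ≤ ENNReal.ofReal (β * Real.exp (lam₁ * ‖Λ‖) + b)) :
    ∀ t ∈ S, ∀ t' ∈ S, ∀ Λ : Ed d, ∀ h : Ed d → ℝ, Measurable h →
      (∀ x, |h x| ≤ Real.exp (lam₁ * ‖x‖)) →
      |kernelOp d ρ Γ (g t) h Λ - kernelOp d ρ Γ (g t') h Λ|
        ≤ Lg * (β + b) / ι * ‖t - t'‖ * Real.exp (lam₁ * ‖Λ‖) := by
  intro t ht t' ht' Λ h hmeas hbound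
  have hι0 : (0:ℝ) < ι := hι.1
  have hV0 : (1:ℝ) ≤ Real.exp (lam₁ * ‖Λ‖) := by
    apply Real.one_le_exp
    positivity
  set V₁ : Ed d → ℝ := fun X => Real.exp (lam₁ * ‖Λ + (1 - ρ) • X‖) with hV₁def
  set V₂ : Ed d → ℝ := fun X => Real.exp (lam₁ * ‖Λ - ρ • X‖) with hV₂def
  have hV₁pos : ∀ X, 0 < V₁ X := fun X => Real.exp_pos _
  have hV₂pos : ∀ X, 0 < V₂ X := fun X => Real.exp_pos _
  -- measurability
  have hmg : ∀ s : Θ, Measurable (fun X => g s Λ X) := fun s =>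
    (hg_meas s).comp measurable_prodMk_left
  have hmap1 : Measurable (fun X : Ed d => Λ + (1 - ρ) • X) :=
    measurable_const.add (measurable_id.const_smul (1 - ρ) : Measurable fun X : Ed d => (1 - ρ) • X)
  have hmap2 : Measurable (fun X : Ed d => Λ - ρ • X) :=
    measurable_const.sub (measurable_id.const_smul ρ : Measurable fun X : Ed d => ρ • X)
  have hmV₁ : Measurable V₁ := by
    apply Real.measurable_exp.comp
    exact measurable_const.mul hmap1.norm
  have hmV₂ : Measurable V₂ := by
    apply Real.measurable_exp.comp
    exact measurable_const.mul hmap2.norm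
  have hmh1 : Measurable (fun X : Ed d => h (Λ + (1 - ρ) • X)) := hmeas.comp hmap1
  have hmh2 : Measurable (fun X : Ed d => h (Λ - ρ • X)) := hmeas.comp hmap2
  -- pointwise lower bound for the drift integrand
  have hpt : ∀ X, ι * (V₁ X + V₂ X) ≤ g t Λ X * V₁ X + (1 - g t Λ X) * V₂ X := by
    intro X
    have h1 := (hg_range t ht Λ X).1
    have h2 := (hg_range t ht Λ X).2
    have hv1 := (hV₁pos X).le
    have hv2 := (hV₂pos X).le
    nlinarith [mul_le_mul_of_nonneg_right h1 hv1,
      mul_le_mul_of_nonneg_right (by linarith : ι ≤ 1 - g t Λ X) hv2]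
  -- integrability of V₁ + V₂
  have hdr := hdrift t ht Λ
  have hsumInt : Integrable (fun X => V₁ X + V₂ X) Γ := by
    have hm : Measurable (fun X => V₁ X + V₂ X) := hmV₁.add hmV₂
    refine ⟨hm.aestronglyMeasurable, ?_⟩
    rw [hasFiniteIntegral_iff_norm]
    have hle : ∀ X, ENNReal.ofReal ‖V₁ X + V₂ X‖ ≤
        ENNReal.ofReal ι⁻¹ *
          ENNReal.ofReal (g t Λ X * V₁ X + (1 - g t Λ X) * V₂ X) := by
      intro X
      rw [← ENNReal.ofReal_mul (by positivity)]
      apply ENNReal.ofReal_le_ofReal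
      have := hpt X
      have hnn : 0 ≤ V₁ X + V₂ X := by positivity
      rw [Real.norm_of_nonneg hnn, inv_mul_eq_div, le_div_iff₀ hι0]
      linarith [hpt X]
    calc ∫⁻ X, ENNReal.ofReal ‖V₁ X + V₂ X‖ ∂Γ
        ≤ ∫⁻ X, ENNReal.ofReal ι⁻¹ *
            ENNReal.ofReal (g t Λ X * V₁ X + (1 - g t Λ X) * V₂ X) ∂Γ :=
          lintegral_mono hle
      _ = ENNReal.ofReal ι⁻¹ *
            ∫⁻ X, ENNReal.ofReal (g t Λ X * V₁ X + (1 - g t Λ X) * V₂ X) ∂Γ :=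
          lintegral_const_mul _ (by
            apply ENNReal.measurable_ofReal.comp
            exact ((hmg t).mul hmV₁).add ((measurable_const.sub (hmg t)).mul hmV₂))
      _ ≤ ENNReal.ofReal ι⁻¹ * ENNReal.ofReal (β * Real.exp (lam₁ * ‖Λ‖) + b) := by
          exact mul_le_mul_right hdr _
      _ < ⊤ := by
          apply ENNReal.mul_lt_top <;> exact ENNReal.ofReal_lt_top
  -- integrability of the two kernel integrands
  have hIntOf : ∀ s ∈ S, Integrable
      (fun X => g s Λ X * h (Λ + (1 - ρ) • X) + (1 - g s Λ X) * h (Λ - ρ • X)) Γ := by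
    intro s hs
    apply hsumInt.mono
    · exact (((hmg s).mul hmh1).add ((measurable_const.sub (hmg s)).mul hmh2)).aestronglyMeasurable
    · filter_upwards with X
      have h1 := (hg_range s hs Λ X).1
      have h2 := (hg_range s hs Λ X).2
      have hb1 := hbound (Λ + (1 - ρ) • X)
      have hb2 := hbound (Λ - ρ • X)
      have hnn : 0 ≤ V₁ X + V₂ X := by positivity
      rw [Real.norm_eq_abs, Real.norm_of_nonneg hnn]
      calc |g s Λ X * h (Λ + (1 - ρ) • X) + (1 - g s Λ X) * h (Λ - ρ • X)|
          ≤ |g s Λ X * h (Λ + (1 - ρ) • X)| + |(1 - g s Λ X) * h (Λ - ρ • X)| :=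
            abs_add_le _ _
        _ = |g s Λ X| * |h (Λ + (1 - ρ) • X)| + |1 - g s Λ X| * |h (Λ - ρ • X)| := by
            rw [abs_mul, abs_mul]
        _ ≤ V₁ X + V₂ X := by
            have hg1 : |g s Λ X| ≤ 1 := by
              rw [abs_of_nonneg (by linarith)]; linarith [hι.2]
            have hg2 : |1 - g s Λ X| ≤ 1 := by
              rw [abs_of_nonneg (by linarith)]; linarith
            have A := mul_le_mul hg1 hb1 (abs_nonneg _) zero_le_one
            have B := mul_le_mul hg2 hb2 (abs_nonneg _) zero_le_one
            rw [one_mul] at A B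
            exact add_le_add A B
  -- the integral bound on V₁ + V₂
  have hIle : ∫ X, (V₁ X + V₂ X) ∂Γ ≤ (β * Real.exp (lam₁ * ‖Λ‖) + b) / ι := by
    rw [le_div_iff₀ hι0]
    have heq : (∫ X, (V₁ X + V₂ X) ∂Γ) * ι = ∫ X, ι * (V₁ X + V₂ X) ∂Γ := by
      rw [integral_const_mul]; ring
    rw [heq]
    have hnn : 0 ≤ᵐ[Γ] fun X => ι * (V₁ X + V₂ X) := by
      filter_upwards with X; positivity
    rw [integral_eq_lintegral_of_nonneg_ae hnn
      ((measurable_const.mul (hmV₁.add hmV₂)).aestronglyMeasurable)]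
    have hle : (∫⁻ X, ENNReal.ofReal (ι * (V₁ X + V₂ X)) ∂Γ) ≤
        ENNReal.ofReal (β * Real.exp (lam₁ * ‖Λ‖) + b) := by
      refine le_trans (lintegral_mono fun X => ?_) hdr
      exact ENNReal.ofReal_le_ofReal (hpt X)
    calc (∫⁻ X, ENNReal.ofReal (ι * (V₁ X + V₂ X)) ∂Γ).toReal
        ≤ (ENNReal.ofReal (β * Real.exp (lam₁ * ‖Λ‖) + b)).toReal :=
          ENNReal.toReal_mono ENNReal.ofReal_ne_top hle
      _ = β * Real.exp (lam₁ * ‖Λ‖) + b := by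
          rw [ENNReal.toReal_ofReal]
          exact add_nonneg (mul_nonneg hβ.1.le (Real.exp_pos _).le) hb.le
  -- main computation
  have hft := hIntOf t ht
  have hft' := hIntOf t' ht'
  have hdiff : kernelOp d ρ Γ (g t) h Λ - kernelOp d ρ Γ (g t') h Λ =
      ∫ X, (g t Λ X - g t' Λ X) * (h (Λ + (1 - ρ) • X) - h (Λ - ρ • X)) ∂Γ := by
    rw [kernelOp, kernelOp, ← integral_sub hft hft']
    congr 1; funext X; ring
  rw [hdiff]
  have hdom : Integrable (fun X => Lg * ‖t - t'‖ * (V₁ X + V₂ X)) Γ :=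
    hsumInt.const_mul _
  have habs : |∫ X, (g t Λ X - g t' Λ X) * (h (Λ + (1 - ρ) • X) - h (Λ - ρ • X)) ∂Γ|
      ≤ ∫ X, Lg * ‖t - t'‖ * (V₁ X + V₂ X) ∂Γ := by
    rw [← Real.norm_eq_abs]
    refine le_trans (norm_integral_le_integral_norm _) ?_
    simp only [Real.norm_eq_abs]
    have heq2 : (fun X => |(g t Λ X - g t' Λ X) * (h (Λ + (1 - ρ) • X) - h (Λ - ρ • X))|) =
        fun X => |(g t Λ X * h (Λ + (1 - ρ) • X) + (1 - g t Λ X) * h (Λ - ρ • X)) -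
          (g t' Λ X * h (Λ + (1 - ρ) • X) + (1 - g t' Λ X) * h (Λ - ρ • X))| := by
      funext X; congr 1; ring
    have hfint : Integrable
        (fun X => |(g t Λ X - g t' Λ X) * (h (Λ + (1 - ρ) • X) - h (Λ - ρ • X))|) Γ := by
      rw [heq2]
      exact ((hft.sub hft').abs).congr (by filter_upwards with X using by simp)
    apply integral_mono hfint hdom
    intro X
    show |(g t Λ X - g t' Λ X) * (h (Λ + (1 - ρ) • X) - h (Λ - ρ • X))|
        ≤ Lg * ‖t - t'‖ * (V₁ X + V₂ X)
    rw [abs_mul]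
    have h1 := hLip t ht t' ht' Λ X
    have h2 : |h (Λ + (1 - ρ) • X) - h (Λ - ρ • X)| ≤ V₁ X + V₂ X :=
      le_trans (abs_sub _ _) (add_le_add (hbound _) (hbound _))
    calc |g t Λ X - g t' Λ X| * |h (Λ + (1 - ρ) • X) - h (Λ - ρ • X)|
        ≤ (Lg * ‖t - t'‖) * (V₁ X + V₂ X) := by
          apply mul_le_mul h1 h2 (abs_nonneg _)
          positivity
      _ = Lg * ‖t - t'‖ * (V₁ X + V₂ X) := by ring
  calc |∫ X, (g t Λ X - g t' Λ X) * (h (Λ + (1 - ρ) • X) - h (Λ - ρ • X)) ∂Γ|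
      ≤ ∫ X, Lg * ‖t - t'‖ * (V₁ X + V₂ X) ∂Γ := habs
    _ = Lg * ‖t - t'‖ * ∫ X, (V₁ X + V₂ X) ∂Γ := integral_const_mul _ _
    _ ≤ Lg * ‖t - t'‖ * ((β * Real.exp (lam₁ * ‖Λ‖) + b) / ι) := by
        apply mul_le_mul_of_nonneg_left hIle
        positivity
    _ = Lg * ‖t - t'‖ * (β * Real.exp (lam₁ * ‖Λ‖) + b) / ι := by ring
    _ ≤ Lg * ‖t - t'‖ * ((β + b) * Real.exp (lam₁ * ‖Λ‖)) / ι := by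
        have key : β * Real.exp (lam₁ * ‖Λ‖) + b ≤ (β + b) * Real.exp (lam₁ * ‖Λ‖) := by
          nlinarith
        gcongr
    _ = Lg * (β + b) / ι * ‖t - t'‖ * Real.exp (lam₁ * ‖Λ‖) := by ring
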